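/- In the bribery game with restrictions in which Ann believes Bob plays R after B and Bob strongly believes Ann's rationalizable strategies, Selective Rationalizability is empty: there is no step-1 CPS for Bob in Δ_B satisfying S3, since strong belief in Ann's rationalizable strategies forces Bob, conditional on B, to expect I after A and hence to play A, contradicting the outcome required by Ann's restriction being consistent at later steps; formally, S_{RΔ}^∞ = ∅ for Δ_A = {μ_A : μ_A(R | B-node) = 1} and Δ_B the set of all CPSs of Bob. -/

import Mathlib

/-! The bribery game: Ann chooses `N` (payoffs `(0,0)`, Ann's first) or
`B`; after `B`, Bob chooses `R` (payoffs `(-2,0)`) or `A`; after `(B,A)`,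
Ann chooses `P` (payoffs `(-1,-3)`) or `I` (payoffs `(1,1)`). -/

namespace Bribery

/-- Ann's action at the root. -/
inductive Act1 | N | B
deriving DecidableEq

instance : Fintype Act1 := ⟨{Act1.N, Act1.B}, fun x => by cases x <;> simp⟩

/-- Ann's action after `(B,A)`. -/
inductive Act2 | P | I
deriving DecidableEq

instance : Fintype Act2 := ⟨{Act2.P, Act2.I}, fun x => by cases x <;> simp⟩

/-- Bob's action after `B`. -/
inductive ActB | R | A
deriving DecidableEq

instance : Fintype ActB := ⟨{ActB.R, ActB.A}, fun x => by cases x <;> simp⟩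

/-- Ann's strategies: a choice at each of her two information sets. -/
abbrev SA : Type := Act1 × Act2

/-- Bob's strategies. -/
abbrev SB : Type := ActB

/-- Terminal histories. -/
inductive Z | zN | zR | zP | zI
deriving DecidableEq

instance : Fintype Z := ⟨{Z.zN, Z.zR, Z.zP, Z.zI}, fun x => by cases x <;> simp⟩

open Act1 Act2 ActB Z
open scoped Classical

/-- The outcome function `ζ`. -/
def ζ (s : SA × SB) : Z :=
  match s.1.1 with
  | N => zN
  | B => match s.2 with
    | R => zR
    | A => match s.1.2 with
      | P => zP
      | I => zI

/-- Ann's payoffs. -/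
def uA : Z → ℝ
  | zN => 0 | zR => -2 | zP => -1 | zI => 1

/-- Bob's payoffs. -/
def uB : Z → ℝ
  | zN => 0 | zR => 0 | zP => -3 | zI => 1

/-! A CPS of Ann is parametrized by `α ∈ [0,1]`, the initial probability
that Bob plays `R` (her belief after `(B,A)` is necessarily concentrated
on `A`, the only strategy of Bob reaching that information set).  A CPS of
Bob is parametrized by `β ∈ [0,1]`, the probability (conditional on `B`,
his only information set) that Ann's strategy is `(B,P)` (his belief is
concentrated on the strategies of Ann reaching his information set, i.e.
those choosing `B`). -/

/-- Ann's expected payoff at the root from strategy `s`, when Bob plays `R`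
with probability `α`. -/
def EUA (α : ℝ) (s : SA) : ℝ :=
  α * uA (ζ (s, R)) + (1 - α) * uA (ζ (s, A))

/-- Ann's sequential best replies to the CPS with initial probability `α`
of `R`: optimality at the root, and (if her second information set is
reached by her strategy, i.e. she chooses `B`) optimality there under the
conditional belief concentrated on `A`. -/
def ρA (α : ℝ) : Set SA :=
  { s | (∀ s' : SA, EUA α s' ≤ EUA α s) ∧
      (s.1 = B → ∀ a' : Act2, uA (ζ ((B, a'), A)) ≤ uA (ζ ((B, s.2), A))) }

/-- Bob's expected payoff from `b` when, conditional on `B`, Ann plays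
`(B,P)` with probability `β` and `(B,I)` with probability `1-β`. -/
def EUB (β : ℝ) (b : SB) : ℝ :=
  β * uB (ζ ((B, P), b)) + (1 - β) * uB (ζ ((B, I), b))

/-- Bob's sequential best replies. -/
def ρB (β : ℝ) : Set SB :=
  { b | ∀ b' : SB, EUB β b' ≤ EUB β b }

/-- The probability Ann's CPS `α` assigns at the root to a set `X` of
Bob's strategies. -/
noncomputable def massA (α : ℝ) (X : Set SB) : ℝ :=
  (if R ∈ X then α else 0) + (if A ∈ X then 1 - α else 0)

/-- Ann's CPS `α` strongly believes `X ⊆ S_Bob`: probability one at every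
information set of Ann at which `X` is not contradicted.  At the root all
of Bob's strategies are possible; at Ann's second information set her
belief is concentrated on `A`, and `X` is not contradicted there iff
`A ∈ X`, in which case the requirement holds automatically. -/
def SBA (α : ℝ) (X : Set SB) : Prop :=
  X.Nonempty → massA α X = 1

/-- The probability Bob's CPS `β` assigns (conditional on `B`) to a set
`Y` of Ann's strategies. -/
noncomputable def massB (β : ℝ) (Y : Set SA) : ℝ :=
  (if (B, P) ∈ Y then β else 0) + (if (B, I) ∈ Y then 1 - β else 0)

/-- Bob's CPS `β` strongly believes `Y ⊆ S_Ann`: probability one at his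
information set whenever `Y` contains a strategy reaching it (one choosing
`B`). -/
def SBB (β : ℝ) (Y : Set SA) : Prop :=
  (Y ∩ { s : SA | s.1 = B }).Nonempty → massB β Y = 1

/-- The Rationalizability procedure (Ann's and Bob's surviving sets). -/
def Rat : ℕ → Set SA × Set SB
  | 0 => (Set.univ, Set.univ)
  | n + 1 =>
      ({ s | ∃ α : ℝ, 0 ≤ α ∧ α ≤ 1 ∧ s ∈ ρA α ∧
          ∀ q, q < n + 1 → SBA α (Rat q).2 },
       { b | ∃ β : ℝ, 0 ≤ β ∧ β ≤ 1 ∧ b ∈ ρB β ∧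
          ∀ q, q < n + 1 → SBB β (Rat q).1 })

/-- Ann's rationalizable strategies. -/
def RatInfA : Set SA := ⋂ n : ℕ, (Rat n).1

/-- Bob's rationalizable strategies. -/
def RatInfB : Set SB := ⋂ n : ℕ, (Rat n).2

end Bribery

namespace Bribery

/-- Selective Rationalizability for the bribery game, for restriction sets
`ΔA` (on Ann's CPS parameter `α`) and `ΔB` (on Bob's CPS parameter `β`):
step `0` gives the rationalizable strategies; at step `n+1` a strategy
survives iff it is a sequential best reply to a CPS in the player's
restriction set that (S2) strongly believes the opponent's surviving sets
of all previous steps and (S3) strongly believes every step of the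
opponent's Rationalizability sequence. -/
def SelRat (ΔA ΔB : Set ℝ) : ℕ → Set SA × Set SB
  | 0 => (RatInfA, RatInfB)
  | n + 1 =>
      ({ s | ∃ α ∈ ΔA, 0 ≤ α ∧ α ≤ 1 ∧ s ∈ ρA α ∧
          (∀ q, q < n + 1 → SBA α (SelRat ΔA ΔB q).2) ∧
          (∀ q : ℕ, SBA α (Rat q).2) },
       { b | ∃ β ∈ ΔB, 0 ≤ β ∧ β ≤ 1 ∧ b ∈ ρB β ∧
          (∀ q, q < n + 1 → SBB β (SelRat ΔA ΔB q).1) ∧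
          (∀ q : ℕ, SBB β (Rat q).1) })

end Bribery

open Bribery Bribery.Act1 Bribery.Act2 Bribery.ActB Bribery.Z

lemma mem_Rat1A (s : SA) : s ∈ (Rat 1).1 ↔
    ∃ α : ℝ, 0 ≤ α ∧ α ≤ 1 ∧ s ∈ ρA α ∧ ∀ q, q < 1 → SBA α (Rat q).2 := by
  rw [show (1:ℕ) = 0+1 from rfl, Bribery.Rat]; rfl

lemma mem_Rat2B (b : SB) : b ∈ (Rat 2).2 ↔
    ∃ β : ℝ, 0 ≤ β ∧ β ≤ 1 ∧ b ∈ ρB β ∧ ∀ q, q < 2 → SBB β (Rat q).1 := by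
  rw [show (2:ℕ) = 1+1 from rfl, Bribery.Rat]; rfl

lemma mem_SelRat1A (ΔA ΔB : Set ℝ) (s : SA) : s ∈ (SelRat ΔA ΔB 1).1 ↔
    ∃ α ∈ ΔA, 0 ≤ α ∧ α ≤ 1 ∧ s ∈ ρA α ∧
      (∀ q, q < 1 → SBA α (SelRat ΔA ΔB q).2) ∧
      (∀ q : ℕ, SBA α (Rat q).2) := by
  rw [show (1:ℕ) = 0+1 from rfl, Bribery.SelRat]; rfl

lemma hBI1 : ((B, I) : SA) ∈ (Rat 1).1 := by
  rw [mem_Rat1A]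
  refine ⟨0, le_refl 0, zero_le_one, ⟨?_, ?_⟩, ?_⟩
  · intro s'
    fin_cases s' <;> simp [EUA, ζ, uA] <;> norm_num
  · intro _ a'; fin_cases a' <;> simp [ζ, uA] <;> norm_num
  · intro q hq
    interval_cases q
    intro _
    rw [Bribery.Rat]
    norm_num [massA]

lemma hBP1 : ((B, P) : SA) ∉ (Rat 1).1 := by
  rw [mem_Rat1A]
  rintro ⟨α, _, _, ⟨_, h2⟩, _⟩
  have := h2 rfl I
  simp [ζ, uA] at this
  linarith

lemma hA2 : (A : SB) ∈ (Rat 2).2 := by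
  rw [mem_Rat2B]
  refine ⟨0, le_refl 0, zero_le_one, ?_, ?_⟩
  · intro b'; fin_cases b' <;> simp [EUB, ζ, uB] <;> norm_num
  · intro q hq
    interval_cases q
    · intro _
      rw [Bribery.Rat]
      norm_num [massB]
    · intro _
      unfold massB
      rw [if_neg hBP1, if_pos hBI1]
      norm_num

lemma hR2 : (R : SB) ∉ (Rat 2).2 := by
  rw [mem_Rat2B]
  rintro ⟨β, _, _, hρ, hsb⟩
  have h1 : massB β (Rat 1).1 = 1 := hsb 1 (by norm_num) ⟨(B, I), hBI1, rfl⟩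
  unfold massB at h1
  rw [if_neg hBP1, if_pos hBI1] at h1
  have hβ : β = 0 := by linarith
  have := hρ A
  simp [EUB, ζ, uB, hβ] at this
  linarith

/-- In the bribery game with restrictions in which Ann
believes Bob plays `R` after `B` (her restriction set consists of the CPSs
with `μ_A(R | B) = 1`, i.e. `α = 1`) and Bob's restriction set is the set
of all his CPSs, Selective Rationalizability is empty: condition S3
(strong belief in Ann's rationalizable strategies, which forces Bob,
conditional on `B`, to expect `I` after `A` and hence Ann's CPSs to be
consistent with Bob playing `A`) is incompatible with Ann's restriction
`α = 1`, so `S_{RΔ}^∞ = ∅`. -/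
theorem bribery_selective_rationalizability_empty :
    { p : SA × SB |
        p.1 ∈ ⋂ n : ℕ, (SelRat {α : ℝ | α = 1} Set.univ n).1 ∧
        p.2 ∈ ⋂ n : ℕ, (SelRat {α : ℝ | α = 1} Set.univ n).2 } = ∅ := by
  ext p
  simp only [Set.mem_setOf_eq, Set.mem_iInter, Set.mem_empty_iff_false, iff_false]
  rintro ⟨h1a, _⟩
  have h1 := h1a 1
  rw [mem_SelRat1A] at h1
  obtain ⟨α, hα, _, _, _, _, hS3⟩ := h1
  have hα1 : α = 1 := hα
  have := hS3 2 ⟨A, hA2⟩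
  unfold massA at this
  rw [if_neg hR2, if_pos hA2] at this
  rw [hα1] at this
  norm_num at this
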